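/- Let χ : ℝ → ℂ belong to the Carleman class C_M{ℝ}, let r ∈ ℕ with r ≥ 1, and suppose y ∈ C_M{ℝ} and δ : ℝ → [0,∞) satisfy |y(s) - y(s+1) - χ(s)| ≤ δ(s) for all s ∈ ℝ, where δ is of class C^{2r+1} on ℝ. Then there exists z ∈ C_M{ℝ} with z(s) - z(s+1) = χ(s) for all s ∈ ℝ and, for all s ∈ ℝ, |y(s) - z(s)| ≤ (⌈(b-s)⁺⌉ + ⌈(s-a)⁺⌉)·sup_{u ∈ I_s} δ(u) + Σ_{j=1}^{r} (B_j/(2j)!)·(⌈(b-s)⁺⌉ + ⌈(s-a)⁺⌉)·sup_{u ∈ I_s} |δ^{(2j)}(u)| + ((r + 1/2)·B_r/(2r+1)!)·(⌈(b-s)⁺⌉ + ⌈(s-a)⁺⌉ - 1)·sup_{u ∈ I_s} |δ^{(2r+1)}(u)|, where I_s denotes the interval [s - ⌈(s-a)⁺⌉, s + ⌈(b-s)⁺⌉ - 1], x⁺ := max(x,0), and ⌈·⌉ is the ceiling function. -/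

import Mathlib

open Filter Function

/-- The Carleman class `C_M{ℝ}` of smooth functions `f : ℝ → ℂ` whose derivatives satisfy
`‖f⁽ⁿ⁾‖ ≤ C_K ρ_K^n M_n` on every compact interval `K`. -/
noncomputable def CarlemanClass (M : ℕ → ℝ) : Set (ℝ → ℂ) :=
  {f | ContDiff ℝ (⊤ : ℕ∞) f ∧ ∀ α β : ℝ, ∃ C ρ : ℝ, 0 < C ∧ 0 < ρ ∧
    ∀ n : ℕ, ∀ x ∈ Set.Icc α β, ‖iteratedDeriv n f x‖ ≤ C * ρ ^ n * M n}

/-- Nonquasianalyticity of the Carleman class `C_M{ℝ}`. -/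
def Nonquasianalytic (M : ℕ → ℝ) : Prop :=
  ∃ f₀ ∈ CarlemanClass M, f₀ ≠ 0 ∧ ∃ x₀ : ℝ, ∀ n : ℕ, iteratedDeriv n f₀ x₀ = 0

/-- The standing assumptions on the weight sequence `M` : positivity, nonquasianalyticity
of `C_M{ℝ}`, almost-increasingness of `((M_n/n!)^{1/n})_{n ≥ 1}`, `1 = M_0 ≤ M_1`,
logarithmic convexity of `(M_n/n!)`, `sup_{n ≥ 1} (M_{n+1}/((n+1) M_n))^{1/n} < ∞` and
`liminf (M_n/n!)^{1/n} > 0`. -/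
def StandingAssumptions (M : ℕ → ℝ) : Prop :=
  (∀ n, 0 < M n) ∧ Nonquasianalytic M ∧
  (∃ C : ℝ, 0 < C ∧ ∀ p q : ℕ, 1 ≤ p → p ≤ q →
    (M p / (Nat.factorial p : ℝ)) ^ ((1 : ℝ) / (p : ℝ)) ≤
      C * (M q / (Nat.factorial q : ℝ)) ^ ((1 : ℝ) / (q : ℝ))) ∧
  (M 0 = 1 ∧ M 0 ≤ M 1) ∧
  (∀ n : ℕ, (M (n + 1) / (Nat.factorial (n + 1) : ℝ)) ^ 2 ≤
    (M n / (Nat.factorial n : ℝ)) * (M (n + 2) / (Nat.factorial (n + 2) : ℝ))) ∧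
  (∃ B : ℝ, ∀ n : ℕ, 1 ≤ n →
    (M (n + 1) / (((n : ℝ) + 1) * M n)) ^ ((1 : ℝ) / (n : ℝ)) ≤ B) ∧
  (0 < Filter.liminf (fun n : ℕ => (M n / (Nat.factorial n : ℝ)) ^ ((1 : ℝ) / (n : ℝ)))
    Filter.atTop)

/-- The Bernoulli number of order `j` in Dieudonné's convention:
`B_j = |B_{2j}|` where `B_{2j}` is the standard `2j`-th Bernoulli number. -/
noncomputable def Bdieu (j : ℕ) : ℝ := |((bernoulli (2 * j) : ℚ) : ℝ)|



lemma ggs_fact_pos (k : ℕ) : (0:ℝ) < (Nat.factorial k : ℝ) := by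
  exact_mod_cast k.factorial_pos

section MFacts
variable {M : ℕ → ℝ}

private lemma ggs_ratio_mono (hpos : ∀ n, 0 < M n)
    (hconv : ∀ n : ℕ, (M (n + 1) / (Nat.factorial (n + 1) : ℝ)) ^ 2 ≤
      (M n / (Nat.factorial n : ℝ)) * (M (n + 2) / (Nat.factorial (n + 2) : ℝ))) :
    Monotone (fun n => (M (n + 1) / (Nat.factorial (n + 1) : ℝ)) /
      (M n / (Nat.factorial n : ℝ))) := by
  apply monotone_nat_of_le_succ
  intro n
  have h0 : (0:ℝ) < M n / (Nat.factorial n : ℝ) := div_pos (hpos n) (ggs_fact_pos n)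
  have h1 : (0:ℝ) < M (n+1) / (Nat.factorial (n+1) : ℝ) := div_pos (hpos _) (ggs_fact_pos _)
  have h2 : (0:ℝ) < M (n+2) / (Nat.factorial (n+2) : ℝ) := div_pos (hpos _) (ggs_fact_pos _)
  rw [div_le_div_iff₀ h0 h1]
  nlinarith [hconv n]

private lemma ggs_m_mul (hpos : ∀ n, 0 < M n)
    (hconv : ∀ n : ℕ, (M (n + 1) / (Nat.factorial (n + 1) : ℝ)) ^ 2 ≤
      (M n / (Nat.factorial n : ℝ)) * (M (n + 2) / (Nat.factorial (n + 2) : ℝ)))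
    (h0 : M 0 = 1) :
    ∀ j k : ℕ, (M j / (Nat.factorial j : ℝ)) * (M k / (Nat.factorial k : ℝ)) ≤
      M (j + k) / (Nat.factorial (j + k) : ℝ) := by
  set m : ℕ → ℝ := fun n => M n / (Nat.factorial n : ℝ) with hm
  have hmpos : ∀ n, 0 < m n := fun n => div_pos (hpos n) (ggs_fact_pos n)
  have hr := ggs_ratio_mono hpos hconv
  intro j k
  induction j with
  | zero => simp [hm, h0]
  | succ j ih =>
    have e1 : (m (j+1) / m j) * m j = m (j + 1) := div_mul_cancel₀ _ (hmpos j).ne'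
    have e2 : (m (j+k+1) / m (j+k)) * m (j + k) = m (j + k + 1) :=
      div_mul_cancel₀ _ (hmpos (j+k)).ne'
    have hrle : m (j+1) / m j ≤ m (j+k+1) / m (j+k) := hr (Nat.le_add_right j k)
    have hrpos : 0 < m (j+1) / m j := div_pos (hmpos _) (hmpos _)
    have goal : m (j + 1) * m k ≤ m (j + 1 + k) := by
      calc m (j + 1) * m k = (m (j+1) / m j) * (m j * m k) := by rw [← mul_assoc, e1]
        _ ≤ (m (j+1) / m j) * m (j + k) := mul_le_mul_of_nonneg_left ih hrpos.le
        _ ≤ (m (j+k+1) / m (j+k)) * m (j + k) :=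
            mul_le_mul_of_nonneg_right hrle (hmpos _).le
        _ = m (j + k + 1) := e2
        _ = m (j + 1 + k) := by congr 1; omega
    exact goal

private lemma ggs_choose_mul (hpos : ∀ n, 0 < M n)
    (hconv : ∀ n : ℕ, (M (n + 1) / (Nat.factorial (n + 1) : ℝ)) ^ 2 ≤
      (M n / (Nat.factorial n : ℝ)) * (M (n + 2) / (Nat.factorial (n + 2) : ℝ)))
    (h0 : M 0 = 1) {i n : ℕ} (h : i ≤ n) :
    (n.choose i : ℝ) * M i * M (n - i) ≤ M n := by
  have hmm := ggs_m_mul hpos hconv h0 i (n - i)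
  rw [Nat.add_sub_cancel' h] at hmm
  have key : ((n.choose i : ℕ) : ℝ) * (Nat.factorial i : ℝ) * (Nat.factorial (n-i) : ℝ)
      = (Nat.factorial n : ℝ) := by
    exact_mod_cast congrArg (fun t : ℕ => (t : ℝ)) (Nat.choose_mul_factorial_mul_factorial h)
  have hfi := ggs_fact_pos i
  have hfk := ggs_fact_pos (n - i)
  have hfn := ggs_fact_pos n
  calc (n.choose i : ℝ) * M i * M (n - i)
      = ((n.choose i : ℝ) * (Nat.factorial i : ℝ) * (Nat.factorial (n-i) : ℝ)) *
        ((M i / (Nat.factorial i : ℝ)) * (M (n-i) / (Nat.factorial (n-i) : ℝ))) := by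
        field_simp
    _ = (Nat.factorial n : ℝ) *
        ((M i / (Nat.factorial i : ℝ)) * (M (n-i) / (Nat.factorial (n-i) : ℝ))) := by rw [key]
    _ ≤ (Nat.factorial n : ℝ) * (M n / (Nat.factorial n : ℝ)) :=
        mul_le_mul_of_nonneg_left hmm hfn.le
    _ = M n := by field_simp

private lemma ggs_one_le_M (hpos : ∀ n, 0 < M n)
    (hconv : ∀ n : ℕ, (M (n + 1) / (Nat.factorial (n + 1) : ℝ)) ^ 2 ≤
      (M n / (Nat.factorial n : ℝ)) * (M (n + 2) / (Nat.factorial (n + 2) : ℝ)))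
    (h0 : M 0 = 1) (h01 : M 0 ≤ M 1) : ∀ n, 1 ≤ M n ∧ M n ≤ M (n + 1) := by
  set m : ℕ → ℝ := fun n => M n / (Nat.factorial n : ℝ) with hm
  have hmpos : ∀ n, 0 < m n := fun n => div_pos (hpos n) (ggs_fact_pos n)
  have hr := ggs_ratio_mono hpos hconv
  have hm0 : m 0 = 1 := by simp [hm, h0]
  have hr0 : 1 ≤ m 1 / m 0 := by
    have h1 : m 1 = M 1 := by simp [hm]
    rw [hm0, h1, div_one]
    simpa [h0] using h01
  have hrn : ∀ n, 1 ≤ m (n+1) / m n := fun n => le_trans hr0 (hr (Nat.zero_le n))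
  have hmono : ∀ n, m n ≤ m (n + 1) := by
    intro n
    have := hrn n
    rw [le_div_iff₀ (hmpos n)] at this
    linarith
  have hm1 : ∀ n, 1 ≤ m n := by
    intro n
    induction n with
    | zero => rw [hm0]
    | succ n ih => exact le_trans ih (hmono n)
  intro n
  have hfn := ggs_fact_pos n
  have hfn1 : (1:ℝ) ≤ (Nat.factorial n : ℝ) := by
    exact_mod_cast Nat.one_le_iff_ne_zero.mpr (Nat.factorial_ne_zero n)
  constructor
  · have h1 := hm1 n
    rw [hm] at h1
    simp only at h1
    rw [le_div_iff₀ hfn] at h1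
    linarith
  · have h1 := hmono n
    rw [hm] at h1
    simp only at h1
    have hstep : (Nat.factorial (n+1) : ℝ) = ((n:ℝ)+1) * (Nat.factorial n : ℝ) := by
      rw [Nat.factorial_succ]; push_cast; ring
    rw [div_le_div_iff₀ hfn (by rw [hstep]; positivity)] at h1
    rw [hstep] at h1
    have hmul : M n * (Nat.factorial n : ℝ) ≤ M (n+1) * (Nat.factorial n : ℝ) := by
      nlinarith [mul_nonneg (mul_nonneg (Nat.cast_nonneg (α := ℝ) n) (hpos n).le) hfn.le]
    exact le_of_mul_le_mul_right hmul hfn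

end MFacts



lemma ggs_le_inf (n : ℕ) : (n : WithTop ℕ∞) ≤ ((⊤:ℕ∞) : WithTop ℕ∞) := by
  exact_mod_cast le_top

section Calc
variable {F : Type*} [NormedAddCommGroup F] [NormedSpace ℝ F]

lemma ggs_cdOn {f : ℝ → F} (hf : ContDiff ℝ (⊤:ℕ∞) f) (n : ℕ) :
    ContDiffOn ℝ n f Set.univ := (hf.of_le (ggs_le_inf n)).contDiffOn

lemma ggs_iteratedDeriv_add {f g : ℝ → F} (hf : ContDiff ℝ (⊤:ℕ∞) f)
    (hg : ContDiff ℝ (⊤:ℕ∞) g) (n : ℕ) (x : ℝ) :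
    iteratedDeriv n (f + g) x = iteratedDeriv n f x + iteratedDeriv n g x := by
  rw [← iteratedDerivWithin_univ, ← iteratedDerivWithin_univ, ← iteratedDerivWithin_univ]
  exact iteratedDerivWithin_add (Set.mem_univ x) uniqueDiffOn_univ (ggs_cdOn hf n x (Set.mem_univ x)) (ggs_cdOn hg n x (Set.mem_univ x))

lemma ggs_iteratedDeriv_sub {f g : ℝ → F} (hf : ContDiff ℝ (⊤:ℕ∞) f)
    (hg : ContDiff ℝ (⊤:ℕ∞) g) (n : ℕ) (x : ℝ) :
    iteratedDeriv n (fun t => f t - g t) x = iteratedDeriv n f x - iteratedDeriv n g x := by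
  have h1 : (fun t => f t - g t) = f + fun t => -(g t) := by funext t; simp [sub_eq_add_neg]
  rw [h1, ggs_iteratedDeriv_add hf (hg.neg) n x, show (fun t => -(g t)) = -g from rfl, iteratedDeriv_neg, sub_eq_add_neg]

end Calc

lemma ggs_sum_pow {ρ ρ' : ℝ} (hρ : 0 ≤ ρ) (hρ' : 0 ≤ ρ') (n : ℕ) :
    ∑ i ∈ Finset.range (n+1), ρ ^ i * ρ' ^ (n - i) ≤ (ρ + ρ') ^ n := by
  rw [add_pow]
  apply Finset.sum_le_sum
  intro i hi
  have hin : i ≤ n := Nat.lt_succ_iff.mp (Finset.mem_range.mp hi)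
  have h1 : (1:ℝ) ≤ (n.choose i : ℝ) := by
    exact_mod_cast Nat.one_le_iff_ne_zero.mpr (Nat.choose_pos hin).ne'
  nlinarith [pow_nonneg hρ i, pow_nonneg hρ' (n - i), mul_nonneg (pow_nonneg hρ i) (pow_nonneg hρ' (n-i))]

section MulBound
variable {A : Type*} [NormedRing A] [NormedAlgebra ℝ A] {M : ℕ → ℝ}

lemma ggs_mul_bound (hpos : ∀ n, 0 < M n)
    (hchoose : ∀ {i n : ℕ}, i ≤ n → (n.choose i : ℝ) * M i * M (n - i) ≤ M n)
    {f g : ℝ → A} (hf : ContDiff ℝ (⊤:ℕ∞) f) (hg : ContDiff ℝ (⊤:ℕ∞) g)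
    {s : Set ℝ} {C ρ C' ρ' : ℝ} (hC : 0 ≤ C) (hC' : 0 ≤ C') (hρ : 0 ≤ ρ) (hρ' : 0 ≤ ρ')
    (hfb : ∀ n : ℕ, ∀ x ∈ s, ‖iteratedDeriv n f x‖ ≤ C * ρ ^ n * M n)
    (hgb : ∀ n : ℕ, ∀ x ∈ s, ‖iteratedDeriv n g x‖ ≤ C' * ρ' ^ n * M n) :
    ∀ n : ℕ, ∀ x ∈ s, ‖iteratedDeriv n (fun t => f t * g t) x‖ ≤
      (C * C') * (ρ + ρ') ^ n * M n := by
  intro n x hx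
  rw [← norm_iteratedFDeriv_eq_norm_iteratedDeriv]
  refine le_trans (norm_iteratedFDeriv_mul_le (hf.of_le (ggs_le_inf n))
    (hg.of_le (ggs_le_inf n)) x le_rfl) ?_
  have step1 : ∀ i ∈ Finset.range (n+1),
      (n.choose i : ℝ) * ‖iteratedFDeriv ℝ i f x‖ * ‖iteratedFDeriv ℝ (n-i) g x‖ ≤
        ((C * C') * M n) * (ρ ^ i * ρ' ^ (n - i)) := by
    intro i hi
    have hin : i ≤ n := Nat.lt_succ_iff.mp (Finset.mem_range.mp hi)
    have h1 : ‖iteratedFDeriv ℝ i f x‖ ≤ C * ρ ^ i * M i := by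
      rw [norm_iteratedFDeriv_eq_norm_iteratedDeriv]; exact hfb i x hx
    have h2 : ‖iteratedFDeriv ℝ (n-i) g x‖ ≤ C' * ρ' ^ (n-i) * M (n-i) := by
      rw [norm_iteratedFDeriv_eq_norm_iteratedDeriv]; exact hgb (n-i) x hx
    have hch : (0:ℝ) ≤ (n.choose i : ℝ) := Nat.cast_nonneg _
    have hMi : (0:ℝ) ≤ M i := (hpos i).le
    have hMni : (0:ℝ) ≤ M (n-i) := (hpos (n-i)).le
    have hMn : (0:ℝ) ≤ M n := (hpos n).le
    have hcc' : (0:ℝ) ≤ (C * C') * (ρ ^ i * ρ' ^ (n - i)) :=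
      mul_nonneg (mul_nonneg hC hC') (mul_nonneg (pow_nonneg hρ i) (pow_nonneg hρ' (n-i)))
    calc (n.choose i : ℝ) * ‖iteratedFDeriv ℝ i f x‖ * ‖iteratedFDeriv ℝ (n-i) g x‖
        ≤ (n.choose i : ℝ) * (C * ρ ^ i * M i) * (C' * ρ' ^ (n-i) * M (n-i)) := by
          apply mul_le_mul
          · exact mul_le_mul_of_nonneg_left h1 hch
          · exact h2
          · exact norm_nonneg _
          · exact mul_nonneg hch (mul_nonneg (mul_nonneg hC (pow_nonneg hρ i)) hMi)
      _ = (C * C') * (ρ ^ i * ρ' ^ (n - i)) * ((n.choose i : ℝ) * M i * M (n-i)) := by ring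
      _ ≤ (C * C') * (ρ ^ i * ρ' ^ (n - i)) * M n := by
          apply mul_le_mul_of_nonneg_left (hchoose hin) hcc'
      _ = ((C * C') * M n) * (ρ ^ i * ρ' ^ (n - i)) := by ring
  calc ∑ i ∈ Finset.range (n+1),
        (n.choose i : ℝ) * ‖iteratedFDeriv ℝ i f x‖ * ‖iteratedFDeriv ℝ (n-i) g x‖
      ≤ ∑ i ∈ Finset.range (n+1), ((C * C') * M n) * (ρ ^ i * ρ' ^ (n - i)) :=
        Finset.sum_le_sum step1
    _ = ((C * C') * M n) * ∑ i ∈ Finset.range (n+1), ρ ^ i * ρ' ^ (n - i) := by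
        rw [Finset.mul_sum]
    _ ≤ ((C * C') * M n) * (ρ + ρ') ^ n := by
        apply mul_le_mul_of_nonneg_left (ggs_sum_pow hρ hρ' n)
          (mul_nonneg (mul_nonneg hC hC') (hpos n).le)
    _ = (C * C') * (ρ + ρ') ^ n * M n := by ring

end MulBound

section Glue

lemma ggs_glue {g : ℝ → ℝ} (hg : ContDiff ℝ (⊤:ℕ∞) g) {t₀ : ℝ}
    (hflat : ∀ n, iteratedDeriv n g t₀ = 0) :
    (∀ n, iteratedDeriv n (Set.indicator (Set.Ici t₀) g) =
      Set.indicator (Set.Ici t₀) (iteratedDeriv n g)) ∧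
    ContDiff ℝ (⊤:ℕ∞) (Set.indicator (Set.Ici t₀) g) := by
  have key : ∀ (n : ℕ) (x : ℝ), HasDerivAt (Set.indicator (Set.Ici t₀) (iteratedDeriv n g))
      (Set.indicator (Set.Ici t₀) (iteratedDeriv (n+1) g) x) x := by
    intro n x
    rcases lt_trichotomy x t₀ with hx | hx | hx
    · have hnot : x ∉ Set.Ici t₀ := not_le.mpr hx
      rw [Set.indicator_of_notMem hnot]
      have hev : Set.indicator (Set.Ici t₀) (iteratedDeriv n g) =ᶠ[nhds x] (fun _ => (0:ℝ)) := by
        filter_upwards [Iio_mem_nhds hx] with y hy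
        exact Set.indicator_of_notMem (not_le.mpr hy) _
      exact (hasDerivAt_const x (0:ℝ)).congr_of_eventuallyEq hev
    · subst hx
      have hval : Set.indicator (Set.Ici x) (iteratedDeriv (n+1) g) x = 0 := by
        rw [Set.indicator_of_mem Set.self_mem_Ici, hflat (n+1)]
      rw [hval]
      have hleft : HasDerivWithinAt (Set.indicator (Set.Ici x) (iteratedDeriv n g))
          0 (Set.Iic x) x := by
        apply (hasDerivWithinAt_const x (Set.Iic x) (0:ℝ)).congr
        · intro y hy
          rcases eq_or_lt_of_le (Set.mem_Iic.mp hy) with h | h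
          · subst h; rw [Set.indicator_of_mem Set.self_mem_Ici, hflat n]
          · exact Set.indicator_of_notMem (not_le.mpr h) _
        · rw [Set.indicator_of_mem Set.self_mem_Ici, hflat n]
      have hright : HasDerivWithinAt (Set.indicator (Set.Ici x) (iteratedDeriv n g))
          0 (Set.Ici x) x := by
        have hd : HasDerivAt (iteratedDeriv n g) (iteratedDeriv (n+1) g x) x := by
          have := ((hg.of_le (ggs_le_inf (n+1))).differentiable_iteratedDeriv n
            (by exact_mod_cast Nat.lt_succ_self n)) x
          rw [iteratedDeriv_succ]
          exact this.hasDerivAt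
        rw [hflat (n+1)] at hd
        apply hd.hasDerivWithinAt.congr
        · intro y hy; exact Set.indicator_of_mem hy _
        · exact Set.indicator_of_mem Set.self_mem_Ici _
      have := hleft.union hright
      rw [Set.Iic_union_Ici] at this
      exact hasDerivWithinAt_univ.mp this
    · have hmem : x ∈ Set.Ici t₀ := le_of_lt hx
      rw [Set.indicator_of_mem hmem]
      have hev : Set.indicator (Set.Ici t₀) (iteratedDeriv n g) =ᶠ[nhds x]
          iteratedDeriv n g := by
        filter_upwards [Ioi_mem_nhds hx] with y hy
        exact Set.indicator_of_mem (le_of_lt hy) _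
      have hd : HasDerivAt (iteratedDeriv n g) (iteratedDeriv (n+1) g x) x := by
        have := ((hg.of_le (ggs_le_inf (n+1))).differentiable_iteratedDeriv n
          (by exact_mod_cast Nat.lt_succ_self n)) x
        rw [iteratedDeriv_succ]
        exact this.hasDerivAt
      exact hd.congr_of_eventuallyEq hev
  have hiter : ∀ n, iteratedDeriv n (Set.indicator (Set.Ici t₀) g) =
      Set.indicator (Set.Ici t₀) (iteratedDeriv n g) := by
    intro n
    induction n with
    | zero => simp [iteratedDeriv_zero]
    | succ n ih =>
      rw [iteratedDeriv_succ, ih]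
      funext x
      exact (key n x).deriv
  refine ⟨hiter, ?_⟩
  rw [contDiff_iff_iteratedDeriv]
  constructor
  · intro m _
    rw [hiter m]
    have hd : Differentiable ℝ (Set.indicator (Set.Ici t₀) (iteratedDeriv m g)) :=
      fun x => (key m x).differentiableAt
    exact hd.continuous
  · intro m _
    rw [hiter m]
    exact fun x => (key m x).differentiableAt

end Glue

lemma ggs_iteratedDeriv_zero_fun (n : ℕ) (x : ℝ) :
    iteratedDeriv n (fun _ : ℝ => (0:ℝ)) x = 0 := by
  rw [← norm_le_zero_iff, ← norm_iteratedFDeriv_eq_norm_iteratedDeriv, iteratedFDeriv_zero_fun]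
  simp

lemma ggs_iteratedDeriv_const_smul' (c : ℝ) {f : ℝ → ℝ} (hf : ContDiff ℝ (⊤:ℕ∞) f)
    (n : ℕ) (x : ℝ) : iteratedDeriv n (c • f) x = c • iteratedDeriv n f x := by
  rw [← iteratedDerivWithin_univ, ← iteratedDerivWithin_univ]
  exact iteratedDerivWithin_const_smul (Set.mem_univ x) uniqueDiffOn_univ c
    ((hf.of_le (ggs_le_inf n)).contDiffAt.contDiffWithinAt)

lemma ggs_flat_mul {u v : ℝ → ℝ} (hu : ContDiff ℝ (⊤:ℕ∞) u) (hv : ContDiff ℝ (⊤:ℕ∞) v)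
    {x₀ : ℝ} (hfu : ∀ n, iteratedDeriv n u x₀ = 0) (n : ℕ) :
    iteratedDeriv n (fun t => u t * v t) x₀ = 0 := by
  rw [← norm_le_zero_iff, ← norm_iteratedFDeriv_eq_norm_iteratedDeriv]
  refine le_trans (norm_iteratedFDeriv_mul_le (hu.of_le (ggs_le_inf n))
    (hv.of_le (ggs_le_inf n)) x₀ le_rfl) ?_
  have : ∀ i ∈ Finset.range (n+1),
      (n.choose i : ℝ) * ‖iteratedFDeriv ℝ i u x₀‖ * ‖iteratedFDeriv ℝ (n-i) v x₀‖ = 0 := by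
    intro i _
    have h1 : ‖iteratedFDeriv ℝ i u x₀‖ = 0 := by
      rw [norm_iteratedFDeriv_eq_norm_iteratedDeriv, hfu i, norm_zero]
    rw [h1]; ring
  rw [Finset.sum_congr rfl this]
  simp

lemma ggs_clm_deriv_le (T : ℂ →L[ℝ] ℝ) (hT : ‖T‖ ≤ 1) {f : ℝ → ℂ}
    (hf : ContDiff ℝ (⊤:ℕ∞) f) (n : ℕ) (x : ℝ) :
    ‖iteratedDeriv n (T ∘ f) x‖ ≤ ‖iteratedDeriv n f x‖ := by
  rw [← norm_iteratedFDeriv_eq_norm_iteratedDeriv, ← norm_iteratedFDeriv_eq_norm_iteratedDeriv,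
    T.iteratedFDeriv_comp_left hf.contDiffAt (ggs_le_inf n)]
  refine le_trans (T.norm_compContinuousMultilinearMap_le _) ?_
  exact mul_le_of_le_one_left (norm_nonneg _) hT

set_option maxHeartbeats 2000000 in
/-- Construction of a Carleman cutoff function. -/
lemma ggs_cutoff {M : ℕ → ℝ} (hpos : ∀ n, 0 < M n)
    (hchoose : ∀ {i n : ℕ}, i ≤ n → (n.choose i : ℝ) * M i * M (n - i) ≤ M n)
    (hone : ∀ n, 1 ≤ M n ∧ M n ≤ M (n+1))
    (hq : Nonquasianalytic M) {a b : ℝ} (hab : a < b) :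
    ∃ φ : ℝ → ℝ, ContDiff ℝ (⊤:ℕ∞) φ ∧ (∀ x, x ≤ a → φ x = 1) ∧ (∀ x, b ≤ x → φ x = 0) ∧
      (∀ x, 0 ≤ φ x ∧ φ x ≤ 1) ∧
      ∃ C ρ : ℝ, 0 < C ∧ 0 < ρ ∧ ∀ n : ℕ, ∀ x : ℝ, ‖iteratedDeriv n φ x‖ ≤ C * ρ ^ n * M n := by
  classical
  obtain ⟨f₀, hf₀M, hf₀ne, x₀, hflat⟩ := hq
  obtain ⟨hf₀s, hf₀b⟩ := hf₀M
  have h00 : f₀ x₀ = 0 := by have := hflat 0; rwa [iteratedDeriv_zero] at this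
  have hc : ∃ c, f₀ c ≠ 0 := by
    by_contra hcon
    push_neg at hcon
    exact hf₀ne (funext fun t => hcon t)
  obtain ⟨c, hcne⟩ := hc
  have hcx : c ≠ x₀ := fun h => hcne (h ▸ h00)
  -- real and imaginary parts
  set Gre : ℝ → ℝ := Complex.reCLM ∘ f₀ with hGre
  set Gim : ℝ → ℝ := Complex.imCLM ∘ f₀ with hGim
  have hres : ContDiff ℝ (⊤:ℕ∞) Gre := Complex.reCLM.contDiff.comp hf₀s
  have hims : ContDiff ℝ (⊤:ℕ∞) Gim := Complex.imCLM.contDiff.comp hf₀s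
  have hreN : ‖Complex.reCLM‖ ≤ 1 := by
    apply ContinuousLinearMap.opNorm_le_bound _ zero_le_one
    intro z; rw [one_mul]; exact Complex.abs_re_le_norm z
  have himN : ‖Complex.imCLM‖ ≤ 1 := by
    apply ContinuousLinearMap.opNorm_le_bound _ zero_le_one
    intro z; rw [one_mul]; exact Complex.abs_im_le_norm z
  have hreb : ∀ n x, ‖iteratedDeriv n Gre x‖ ≤ ‖iteratedDeriv n f₀ x‖ :=
    fun n x => ggs_clm_deriv_le _ hreN hf₀s n x
  have himb : ∀ n x, ‖iteratedDeriv n Gim x‖ ≤ ‖iteratedDeriv n f₀ x‖ :=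
    fun n x => ggs_clm_deriv_le _ himN hf₀s n x
  have hreflat : ∀ n, iteratedDeriv n Gre x₀ = 0 := by
    intro n
    have := (hreb n x₀).trans (le_of_eq (by rw [hflat n, norm_zero]))
    exact norm_le_zero_iff.mp this
  have himflat : ∀ n, iteratedDeriv n Gim x₀ = 0 := by
    intro n
    have := (himb n x₀).trans (le_of_eq (by rw [hflat n, norm_zero]))
    exact norm_le_zero_iff.mp this
  -- G = |f₀|²
  set G : ℝ → ℝ := (fun t => Gre t * Gre t) + fun t => Gim t * Gim t with hGdef
  have hGs : ContDiff ℝ (⊤:ℕ∞) G := (hres.mul hres).add (hims.mul hims)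
  have hGval : ∀ t, G t = Complex.normSq (f₀ t) := by
    intro t
    simp [hGdef, Complex.normSq_apply, hGre, hGim]
  have hGflat : ∀ n, iteratedDeriv n G x₀ = 0 := by
    intro n
    rw [hGdef, ggs_iteratedDeriv_add (hres.mul hres) (hims.mul hims) n x₀,
      ggs_flat_mul hres hres hreflat n, ggs_flat_mul hims hims himflat n, add_zero]
  have hGnonneg : ∀ t, 0 ≤ G t := by
    intro t; rw [hGval]; exact Complex.normSq_nonneg _
  have hGc : 0 < G c := by rw [hGval]; exact Complex.normSq_pos.mpr hcne
  -- orientation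
  set d : ℝ := |c - x₀| with hd
  have hdpos : 0 < d := abs_pos.mpr (sub_ne_zero.mpr hcx)
  set σ : ℝ := if x₀ < c then 1 else -1 with hσ
  have hσd : x₀ + σ * d = c := by
    rcases lt_or_gt_of_ne hcx with h | h
    · -- c < x₀
      have : ¬ x₀ < c := not_lt.mpr h.le
      rw [hσ, if_neg this, hd, abs_of_neg (by linarith : c - x₀ < 0)]; ring
    · rw [hσ, if_pos h, hd, abs_of_pos (by linarith : 0 < c - x₀)]; ring
  have hσabs : |σ| = 1 := by
    rcases le_or_gt x₀ c with h | h <;> rw [hσ] <;> split <;> simp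
  -- G1 = G ∘ (x₀ + σ·)
  set G2 : ℝ → ℝ := fun t => G (x₀ + t) with hG2
  have hG2s : ContDiff ℝ (⊤:ℕ∞) G2 := hGs.comp (contDiff_const.add contDiff_id)
  set G1 : ℝ → ℝ := fun x => G2 (σ * x) with hG1
  have hG1s : ContDiff ℝ (⊤:ℕ∞) G1 := hG2s.comp (contDiff_const.mul contDiff_id)
  have hG1d : ∀ n x, ‖iteratedDeriv n G1 x‖ = ‖iteratedDeriv n G (x₀ + σ * x)‖ := by
    intro n x
    have e1 : iteratedDeriv n G1 = fun x => σ ^ n • iteratedDeriv n G2 (σ * x) :=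
      iteratedDeriv_comp_const_smul (hG2s.of_le (ggs_le_inf n)) σ
    have e2 : iteratedDeriv n G2 = fun t => iteratedDeriv n G (x₀ + t) :=
      iteratedDeriv_comp_const_add n G x₀
    rw [e1]
    simp only [e2]
    rw [norm_smul, norm_pow, Real.norm_eq_abs, hσabs, one_pow, one_mul]
  have hG1flat : ∀ n, iteratedDeriv n G1 0 = 0 := by
    intro n
    have := hG1d n 0
    rw [mul_zero, add_zero, hGflat n, norm_zero] at this
    exact norm_le_zero_iff.mp (le_of_eq this)
  have hG1nonneg : ∀ x, 0 ≤ G1 x := fun x => hGnonneg _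
  have hG1c : 0 < G1 d := by
    have : G1 d = G c := by rw [hG1, hG2]; simp only []; rw [hσd]
    rw [this]; exact hGc
  -- bounds for G1 on [-2d, 2d]
  obtain ⟨C₀, ρ₀, hC₀, hρ₀, hf₀bd⟩ := hf₀b (x₀ - 2*d) (x₀ + 2*d)
  have hrebd : ∀ n : ℕ, ∀ x ∈ Set.Icc (x₀ - 2*d) (x₀ + 2*d),
      ‖iteratedDeriv n Gre x‖ ≤ C₀ * ρ₀ ^ n * M n :=
    fun n x hx => (hreb n x).trans (hf₀bd n x hx)
  have himbd : ∀ n : ℕ, ∀ x ∈ Set.Icc (x₀ - 2*d) (x₀ + 2*d),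
      ‖iteratedDeriv n Gim x‖ ≤ C₀ * ρ₀ ^ n * M n :=
    fun n x hx => (himb n x).trans (hf₀bd n x hx)
  have hGbd : ∀ n : ℕ, ∀ x ∈ Set.Icc (x₀ - 2*d) (x₀ + 2*d),
      ‖iteratedDeriv n G x‖ ≤ (2*(C₀*C₀)) * (2*ρ₀) ^ n * M n := by
    intro n x hx
    have h1 := ggs_mul_bound hpos (fun {i n} h => hchoose h) hres hres hC₀.le hC₀.le hρ₀.le hρ₀.le
      hrebd hrebd n x hx
    have h2 := ggs_mul_bound hpos (fun {i n} h => hchoose h) hims hims hC₀.le hC₀.le hρ₀.le hρ₀.le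
      himbd himbd n x hx
    rw [hGdef, ggs_iteratedDeriv_add (hres.mul hres) (hims.mul hims) n x]
    calc ‖iteratedDeriv n (fun t => Gre t * Gre t) x + iteratedDeriv n (fun t => Gim t * Gim t) x‖
        ≤ ‖iteratedDeriv n (fun t => Gre t * Gre t) x‖ +
          ‖iteratedDeriv n (fun t => Gim t * Gim t) x‖ := norm_add_le _ _
      _ ≤ (C₀*C₀) * (ρ₀+ρ₀) ^ n * M n + (C₀*C₀) * (ρ₀+ρ₀) ^ n * M n := add_le_add h1 h2
      _ = (2*(C₀*C₀)) * (2*ρ₀) ^ n * M n := by ring_nf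
  have hG1bd : ∀ n : ℕ, ∀ x ∈ Set.Icc (-(2*d)) (2*d),
      ‖iteratedDeriv n G1 x‖ ≤ (2*(C₀*C₀)) * (2*ρ₀) ^ n * M n := by
    intro n x hx
    rw [hG1d n x]
    apply hGbd n
    constructor
    · have : -(2*d) ≤ σ * x := by
        have h1 : |σ * x| ≤ 2*d := by
          rw [abs_mul, hσabs, one_mul]
          exact abs_le.mpr ⟨hx.1, hx.2⟩
        linarith [neg_abs_le (σ * x), abs_le.mp h1]
      linarith
    · have h1 : |σ * x| ≤ 2*d := by
        rw [abs_mul, hσabs, one_mul]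
        exact abs_le.mpr ⟨hx.1, hx.2⟩
      linarith [le_abs_self (σ * x)]
  -- one-sided glue u
  set u : ℝ → ℝ := Set.indicator (Set.Ici 0) G1 with hu
  obtain ⟨huiter, hus⟩ := ggs_glue hG1s hG1flat
  have hG10 : G1 0 = 0 := by
    have := hG1flat 0; rwa [iteratedDeriv_zero] at this
  have huval0 : ∀ x ≤ (0:ℝ), u x = 0 := by
    intro x hx
    rcases eq_or_lt_of_le hx with h | h
    · have e : u 0 = G1 0 := Set.indicator_of_mem Set.self_mem_Ici _
      rw [h, e, hG10]
    · exact Set.indicator_of_notMem (not_le.mpr h) _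
  have hunonneg : ∀ x, 0 ≤ u x := by
    intro x
    exact Set.indicator_nonneg (fun t _ => hG1nonneg t) x
  have hud : 0 < u d := by
    have e : u d = G1 d := Set.indicator_of_mem (Set.mem_Ici.mpr hdpos.le) _
    rw [e]
    exact hG1c
  have hub : ∀ n : ℕ, ∀ x ∈ Set.Icc (-(2*d)) (2*d),
      ‖iteratedDeriv n u x‖ ≤ (2*(C₀*C₀)) * (2*ρ₀) ^ n * M n := by
    intro n x hx
    rw [huiter n]
    exact le_trans (norm_indicator_le_norm_self _ _) (hG1bd n x hx)
  -- reflected function v and bump p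
  set w : ℝ → ℝ := fun t => u (2*d + t) with hw
  set v : ℝ → ℝ := fun x => w (-x) with hv
  have hws : ContDiff ℝ (⊤:ℕ∞) w := hus.comp (contDiff_const.add contDiff_id)
  have hvs : ContDiff ℝ (⊤:ℕ∞) v := hws.comp contDiff_id.neg
  have hvval : ∀ x, v x = u (2*d + (-x)) := fun x => rfl
  have hvd : ∀ n x, ‖iteratedDeriv n v x‖ = ‖iteratedDeriv n u (2*d + (-x))‖ := by
    intro n x
    have e1 : iteratedDeriv n v x = (-1:ℝ) ^ n • iteratedDeriv n w (-x) :=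
      iteratedDeriv_comp_neg n w x
    have e2 : iteratedDeriv n w = fun t => iteratedDeriv n u (2*d + t) :=
      iteratedDeriv_comp_const_add n u (2*d)
    rw [e1, e2, norm_smul, norm_pow, Real.norm_eq_abs, abs_neg, abs_one, one_pow, one_mul]
  have hvbd : ∀ n : ℕ, ∀ x ∈ Set.Icc (0:ℝ) (2*d),
      ‖iteratedDeriv n v x‖ ≤ (2*(C₀*C₀)) * (2*ρ₀) ^ n * M n := by
    intro n x hx
    rw [hvd n x]
    apply hub n
    constructor <;> [linarith [hx.2]; linarith [hx.1, hdpos]]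
  have hubd' : ∀ n : ℕ, ∀ x ∈ Set.Icc (0:ℝ) (2*d),
      ‖iteratedDeriv n u x‖ ≤ (2*(C₀*C₀)) * (2*ρ₀) ^ n * M n := by
    intro n x hx
    apply hub n
    constructor <;> [linarith [hx.1, hdpos]; linarith [hx.2]]
  set p : ℝ → ℝ := fun x => u x * v x with hp
  have hps : ContDiff ℝ (⊤:ℕ∞) p := hus.mul hvs
  set Cu : ℝ := 2*(C₀*C₀) with hCu
  have hCupos : 0 < Cu := by positivity
  have hpbd : ∀ n : ℕ, ∀ x ∈ Set.Icc (0:ℝ) (2*d),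
      ‖iteratedDeriv n p x‖ ≤ (Cu*Cu) * (2*ρ₀ + 2*ρ₀) ^ n * M n :=
    ggs_mul_bound hpos (fun {i n} h => hchoose h) hus hvs hCupos.le hCupos.le
      (by positivity) (by positivity) hubd' hvbd
  have hpnonneg : ∀ x, 0 ≤ p x := fun x => mul_nonneg (hunonneg x) (hunonneg _)
  have hp0 : ∀ x ≤ (0:ℝ), p x = 0 := by
    intro x hx; rw [hp]; simp only []; rw [huval0 x hx, zero_mul]
  have hp2d : ∀ x, 2*d ≤ x → p x = 0 := by
    intro x hx
    rw [hp]; simp only []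
    rw [hvval, huval0 (2*d + (-x)) (by linarith), mul_zero]
  have hpd : 0 < p d := by
    rw [hp]; simp only []
    rw [hvval]
    have : (2*d + (-d)) = d := by ring
    rw [this]
    exact mul_pos hud hud
  -- rescaled bump q supported in [a,b]
  set lam : ℝ := 2*d/(b-a) with hlam
  have hlampos : 0 < lam := by
    apply div_pos (by linarith) (by linarith)
  have hlamba : lam * (b - a) = 2*d := by
    rw [hlam, div_mul_cancel₀ _ (sub_ne_zero.mpr hab.ne')]
  set P : ℝ → ℝ := fun t => p (t + (-(lam*a))) with hP
  have hPs : ContDiff ℝ (⊤:ℕ∞) P := hps.comp (contDiff_id.add contDiff_const)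
  set q : ℝ → ℝ := fun x => P (lam * x) with hq'
  have hqs : ContDiff ℝ (⊤:ℕ∞) q := hPs.comp (contDiff_const.mul contDiff_id)
  have hqval : ∀ x, q x = p (lam * (x - a)) := by
    intro x
    rw [hq', hP]; simp only []
    congr 1; ring
  have hqderiv : ∀ n x, ‖iteratedDeriv n q x‖ = lam ^ n * ‖iteratedDeriv n p (lam*(x-a))‖ := by
    intro n x
    have e1 : iteratedDeriv n q = fun x => lam ^ n • iteratedDeriv n P (lam * x) :=
      iteratedDeriv_comp_const_smul (hPs.of_le (ggs_le_inf n)) lam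
    have e2 : iteratedDeriv n P = fun t => iteratedDeriv n p (t + (-(lam*a))) :=
      iteratedDeriv_comp_add_const n p (-(lam*a))
    rw [e1]
    simp only [e2]
    rw [norm_smul, norm_pow, Real.norm_eq_abs, abs_of_pos hlampos]
    congr 2
    ring
  have hq0 : ∀ x ≤ a, q x = 0 := by
    intro x hx
    rw [hqval]
    exact hp0 _ (by nlinarith)
  have hqb : ∀ x, b ≤ x → q x = 0 := by
    intro x hx
    rw [hqval]
    apply hp2d
    rw [← hlamba]
    nlinarith
  have hqnonneg : ∀ x, 0 ≤ q x := by
    intro x; rw [hqval]; exact hpnonneg _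
  set Cq : ℝ := Cu*Cu with hCq
  set ρq : ℝ := lam * (2*ρ₀ + 2*ρ₀) with hρq
  have hCqpos : 0 < Cq := mul_pos hCupos hCupos
  have hρqpos : 0 < ρq := mul_pos hlampos (by linarith)
  have hqbd : ∀ n : ℕ, ∀ x : ℝ, ‖iteratedDeriv n q x‖ ≤ Cq * ρq ^ n * M n := by
    intro n x
    rcases lt_or_ge x a with hxa | hxa
    · have hev : q =ᶠ[nhds x] (fun _ => (0:ℝ)) := by
        filter_upwards [Iio_mem_nhds hxa] with t ht
        exact hq0 t (le_of_lt ht)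
      rw [hev.iteratedDeriv_eq n, ggs_iteratedDeriv_zero_fun n x, norm_zero]
      exact mul_nonneg (mul_nonneg hCqpos.le (pow_nonneg hρqpos.le n)) (hpos n).le
    rcases lt_or_ge b x with hbx | hbx
    · have hev : q =ᶠ[nhds x] (fun _ => (0:ℝ)) := by
        filter_upwards [Ioi_mem_nhds hbx] with t ht
        exact hqb t (le_of_lt ht)
      rw [hev.iteratedDeriv_eq n, ggs_iteratedDeriv_zero_fun n x, norm_zero]
      exact mul_nonneg (mul_nonneg hCqpos.le (pow_nonneg hρqpos.le n)) (hpos n).le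
    · rw [hqderiv n x]
      have hmem : lam * (x - a) ∈ Set.Icc (0:ℝ) (2*d) := by
        constructor
        · nlinarith
        · rw [← hlamba]; nlinarith
      calc lam ^ n * ‖iteratedDeriv n p (lam*(x-a))‖
          ≤ lam ^ n * ((Cu*Cu) * (2*ρ₀ + 2*ρ₀) ^ n * M n) :=
            mul_le_mul_of_nonneg_left (hpbd n _ hmem) (pow_nonneg hlampos.le n)
        _ = Cq * ρq ^ n * M n := by rw [hρq, mul_pow]; ring
  have hqmid : 0 < q ((a+b)/2) := by
    rw [hqval]
    have : lam * ((a+b)/2 - a) = d := by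
      have e : (a+b)/2 - a = (b-a)/2 := by ring
      rw [e]
      linear_combination hlamba / 2
    rw [this]
    exact hpd
  have hqcont : Continuous q := hqs.continuous
  have hqint : ∀ s t : ℝ, IntervalIntegrable q MeasureTheory.volume s t :=
    fun s t => hqcont.intervalIntegrable s t
  -- positive total integral
  set T : ℝ := ∫ t in a..b, q t with hT
  have hTpos : 0 < T := by
    set mid : ℝ := (a+b)/2 with hmid
    have hconts := Metric.continuousAt_iff.mp (hqcont.continuousAt (x := mid))
    obtain ⟨dd, hddpos, hdd⟩ := hconts (q mid / 2) (half_pos hqmid)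
    set η : ℝ := min (dd/2) ((b-a)/4) with hη
    have hηpos : 0 < η := lt_min (half_pos hddpos) (by linarith)
    have hqlow : ∀ t ∈ Set.Icc (mid - η) (mid + η), q mid / 2 ≤ q t := by
      intro t ht
      have hdist : dist t mid < dd := by
        rw [Real.dist_eq, abs_sub_lt_iff]
        have h1 : η ≤ dd/2 := min_le_left _ _
        constructor <;> [linarith [ht.2]; linarith [ht.1]]
      have := hdd hdist
      rw [Real.dist_eq, abs_sub_lt_iff] at this
      linarith [this.1, this.2]
    have hsub : a ≤ mid - η ∧ mid + η ≤ b := by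
      have h2 : η ≤ (b-a)/4 := min_le_right _ _
      constructor <;> [skip; skip] <;> rw [hmid] <;> linarith
    have hlow : (mid + η - (mid - η)) * (q mid / 2) ≤ ∫ t in (mid - η)..(mid + η), q t := by
      have := intervalIntegral.integral_mono_on (by linarith : mid - η ≤ mid + η)
        (intervalIntegrable_const (c := q mid / 2)) (hqint _ _) hqlow
      rwa [intervalIntegral.integral_const, smul_eq_mul] at this
    have hsplit1 : (∫ t in a..(mid - η), q t) + (∫ t in (mid - η)..(mid + η), q t)
        = ∫ t in a..(mid + η), q t :=
      intervalIntegral.integral_add_adjacent_intervals (hqint _ _) (hqint _ _)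
    have hsplit2 : (∫ t in a..(mid + η), q t) + (∫ t in (mid + η)..b, q t) = T :=
      intervalIntegral.integral_add_adjacent_intervals (hqint _ _) (hqint _ _)
    have hnn1 : 0 ≤ ∫ t in a..(mid - η), q t :=
      intervalIntegral.integral_nonneg hsub.1 (fun t _ => hqnonneg t)
    have hnn2 : 0 ≤ ∫ t in (mid + η)..b, q t :=
      intervalIntegral.integral_nonneg hsub.2 (fun t _ => hqnonneg t)
    have hmidpos : 0 < (mid + η - (mid - η)) * (q mid / 2) :=
      mul_pos (by linarith) (half_pos hqmid)
    linarith
  -- primitive and cutoff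
  set Fq : ℝ → ℝ := fun x => ∫ t in a..x, q t with hFq
  have hFd : ∀ x, HasDerivAt Fq (q x) x := by
    intro x
    exact intervalIntegral.integral_hasDerivAt_right (hqint a x)
      (hqcont.stronglyMeasurableAtFilter _ _) hqcont.continuousAt
  have hF0 : ∀ x ≤ a, Fq x = 0 := by
    intro x hx
    show (∫ t in a..x, q t) = 0
    have heq : Set.EqOn q (fun _ => (0:ℝ)) (Set.uIcc a x) := by
      intro t ht
      rcases Set.mem_uIcc.mp ht with h | h
      · exact hq0 t (by linarith [h.2])
      · exact hq0 t (by linarith [h.2])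
    rw [intervalIntegral.integral_congr heq, intervalIntegral.integral_zero]
  have hFT : ∀ x, b ≤ x → Fq x = T := by
    intro x hx
    have hsplit : (∫ t in a..b, q t) + (∫ t in b..x, q t) = Fq x :=
      intervalIntegral.integral_add_adjacent_intervals (hqint _ _) (hqint _ _)
    have hzero : (∫ t in b..x, q t) = 0 := by
      have heq : Set.EqOn q (fun _ => (0:ℝ)) (Set.uIcc b x) := by
        intro t ht
        rcases Set.mem_uIcc.mp ht with h | h
        · exact hqb t h.1
        · exact hqb t (by linarith [h.1])
      rw [intervalIntegral.integral_congr heq, intervalIntegral.integral_zero]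
    rw [← hsplit, hzero, add_zero, hT]
  have hFnonneg : ∀ x, 0 ≤ Fq x := by
    intro x
    rcases le_or_gt a x with h | h
    · exact intervalIntegral.integral_nonneg h (fun t _ => hqnonneg t)
    · rw [hF0 x h.le]
  have hFleT : ∀ x, Fq x ≤ T := by
    intro x
    rcases le_or_gt x b with h | h
    · have hsplit : Fq x + (∫ t in x..b, q t) = T :=
        intervalIntegral.integral_add_adjacent_intervals (hqint _ _) (hqint _ _)
      have hnn : 0 ≤ ∫ t in x..b, q t :=
        intervalIntegral.integral_nonneg h (fun t _ => hqnonneg t)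
      linarith
    · rw [hFT x h.le]
  set φ : ℝ → ℝ := fun x => 1 - Fq x / T with hφ
  have hφd : ∀ x, HasDerivAt φ (-(q x / T)) x := by
    intro x
    exact ((hFd x).div_const T).const_sub 1
  have hderivφ : deriv φ = (-T⁻¹) • q := by
    funext z
    rw [(hφd z).deriv, Pi.smul_apply, smul_eq_mul]
    field_simp
  have hφiter : ∀ n x, iteratedDeriv (n+1) φ x = (-T⁻¹) • iteratedDeriv n q x := by
    intro n x
    rw [iteratedDeriv_succ', hderivφ, ggs_iteratedDeriv_const_smul' (-T⁻¹) hqs n x]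
  have hFcont : Continuous Fq := by
    have : Differentiable ℝ Fq := fun x => (hFd x).differentiableAt
    exact this.continuous
  have hφcont : Continuous φ := continuous_const.sub (hFcont.div_const T)
  have hφs : ContDiff ℝ (⊤:ℕ∞) φ := by
    rw [contDiff_iff_iteratedDeriv]
    constructor
    · intro m _
      cases m with
      | zero => rw [iteratedDeriv_zero]; exact hφcont
      | succ m =>
        have he : iteratedDeriv (m+1) φ = fun x => (-T⁻¹) • iteratedDeriv m q x :=
          funext (hφiter m)
        rw [he]
        exact ((hqs.of_le (ggs_le_inf (m+1))).continuous_iteratedDeriv m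
          (by exact_mod_cast Nat.le_succ m)).const_smul (-T⁻¹ : ℝ)
    · intro m _
      cases m with
      | zero =>
        rw [iteratedDeriv_zero]
        exact fun x => (hφd x).differentiableAt
      | succ m =>
        have he : iteratedDeriv (m+1) φ = fun x => (-T⁻¹) • iteratedDeriv m q x :=
          funext (hφiter m)
        rw [he]
        exact fun x => (((hqs.of_le (ggs_le_inf (m+1))).differentiable_iteratedDeriv m
          (by exact_mod_cast Nat.lt_succ_self m)) x).const_smul (-T⁻¹ : ℝ)
  refine ⟨φ, hφs, ?_, ?_, ?_, ?_⟩
  · intro x hx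
    rw [hφ]; simp only []
    rw [hF0 x hx, zero_div, sub_zero]
  · intro x hx
    rw [hφ]; simp only []
    rw [hFT x hx, div_self hTpos.ne', sub_self]
  · intro x
    have h1 : 0 ≤ Fq x / T := div_nonneg (hFnonneg x) hTpos.le
    have h2 : Fq x / T ≤ 1 := (div_le_one hTpos).mpr (hFleT x)
    rw [hφ]; simp only []
    constructor <;> linarith
  · refine ⟨max 1 (Cq / T), max 1 ρq, lt_max_of_lt_left one_pos, lt_max_of_lt_left one_pos, ?_⟩
    intro n x
    have hM1 : 1 ≤ M n := (hone n).1
    cases n with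
    | zero =>
      have h1 : 0 ≤ Fq x / T := div_nonneg (hFnonneg x) hTpos.le
      have h2 : Fq x / T ≤ 1 := (div_le_one hTpos).mpr (hFleT x)
      have : ‖φ x‖ ≤ 1 := by
        rw [hφ, Real.norm_eq_abs]; simp only []
        rw [abs_le]; constructor <;> linarith
      rw [iteratedDeriv_zero]
      calc ‖φ x‖ ≤ 1 := this
        _ ≤ max 1 (Cq / T) * (max 1 ρq) ^ 0 * M 0 := by
            rw [pow_zero, mul_one]
            calc (1:ℝ) ≤ max 1 (Cq / T) := le_max_left _ _
              _ = max 1 (Cq / T) * 1 := (mul_one _).symm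
              _ ≤ max 1 (Cq / T) * M 0 := by
                  apply mul_le_mul_of_nonneg_left (hone 0).1
                  exact le_trans zero_le_one (le_max_left _ _)
    | succ n =>
      rw [hφiter n x, norm_smul, Real.norm_eq_abs, abs_neg, abs_inv, abs_of_pos hTpos]
      have hb1 : T⁻¹ * ‖iteratedDeriv n q x‖ ≤ T⁻¹ * (Cq * ρq ^ n * M n) :=
        mul_le_mul_of_nonneg_left (hqbd n x) (inv_nonneg.mpr hTpos.le)
      have hρle : ρq ≤ max 1 ρq := le_max_right _ _
      have hρn : ρq ^ n ≤ (max 1 ρq) ^ n := pow_le_pow_left₀ hρqpos.le hρle n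
      have hρsucc : (max 1 ρq) ^ n ≤ (max 1 ρq) ^ (n+1) :=
        pow_le_pow_right₀ (le_max_left _ _) (Nat.le_succ n)
      have hMn : M n ≤ M (n+1) := (hone n).2
      have hCle : Cq / T ≤ max 1 (Cq / T) := le_max_right _ _
      calc T⁻¹ * ‖iteratedDeriv n q x‖ ≤ T⁻¹ * (Cq * ρq ^ n * M n) := hb1
        _ = (Cq / T) * ρq ^ n * M n := by rw [div_eq_mul_inv]; ring
        _ ≤ max 1 (Cq / T) * ρq ^ n * M n := by
            apply mul_le_mul_of_nonneg_right
              (mul_le_mul_of_nonneg_right hCle (pow_nonneg hρqpos.le n)) (hpos n).le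
        _ ≤ max 1 (Cq / T) * (max 1 ρq) ^ n * M n := by
            apply mul_le_mul_of_nonneg_right (mul_le_mul_of_nonneg_left hρn ?_) (hpos n).le
            exact le_trans zero_le_one (le_max_left _ _)
        _ ≤ max 1 (Cq / T) * (max 1 ρq) ^ (n+1) * M (n+1) := by
            apply mul_le_mul
            · exact mul_le_mul_of_nonneg_left hρsucc (le_trans zero_le_one (le_max_left _ _))
            · exact hMn
            · exact (hpos n).le
            · exact mul_nonneg (le_trans zero_le_one (le_max_left _ _))
                (pow_nonneg (le_trans zero_le_one (le_max_left _ _)) _)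

-- helper lemmas for the main theorem
section Helpers
variable {F : Type} [NormedAddCommGroup F] [NormedSpace ℝ F]

lemma ggs_iteratedDeriv_zero' (n : ℕ) (x : ℝ) :
    iteratedDeriv n (fun _ : ℝ => (0:F)) x = 0 := by
  rw [← norm_le_zero_iff, ← norm_iteratedFDeriv_eq_norm_iteratedDeriv, iteratedFDeriv_zero_fun]
  simp

lemma ggs_iteratedDeriv_const' (c : F) {n : ℕ} (hn : n ≠ 0) (x : ℝ) :
    iteratedDeriv n (fun _ : ℝ => c) x = 0 := by
  rw [← norm_le_zero_iff, ← norm_iteratedFDeriv_eq_norm_iteratedDeriv,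
    iteratedFDeriv_const_of_ne hn]
  simp

lemma ggs_iteratedDeriv_finsum (f : ℕ → ℝ → F) (K : ℕ)
    (hf : ∀ k, ContDiff ℝ (⊤:ℕ∞) (f k)) (n : ℕ) (x : ℝ) :
    iteratedDeriv n (fun s => ∑ k ∈ Finset.range K, f k s) x =
      ∑ k ∈ Finset.range K, iteratedDeriv n (f k) x := by
  induction K with
  | zero => simpa using ggs_iteratedDeriv_zero' (F := F) n x
  | succ K ih =>
    have he : (fun s => ∑ k ∈ Finset.range (K+1), f k s) =
        (fun s => ∑ k ∈ Finset.range K, f k s) + f K := by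
      funext s
      simp [Finset.sum_range_succ]
    rw [he, ggs_iteratedDeriv_add (ContDiff.sum (fun i _ => hf i)) (hf K) n x, ih,
      Finset.sum_range_succ]

lemma ggs_shift (f : ℝ → F) (t : ℝ) (n : ℕ) (x : ℝ) :
    iteratedDeriv n (fun s => f (s + t)) x = iteratedDeriv n f (x + t) :=
  congrFun (iteratedDeriv_comp_add_const n f t) x

end Helpers

lemma ggs_ofReal_norm {f : ℝ → ℝ} (hf : ContDiff ℝ (⊤:ℕ∞) f) (n : ℕ) (x : ℝ) :
    ‖iteratedDeriv n (fun t => ((f t : ℝ) : ℂ)) x‖ = ‖iteratedDeriv n f x‖ := by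
  rw [← norm_iteratedFDeriv_eq_norm_iteratedDeriv, ← norm_iteratedFDeriv_eq_norm_iteratedDeriv]
  exact Complex.ofRealLI.norm_iteratedFDeriv_comp_left (hf.of_le (ggs_le_inf n)).contDiffAt le_rfl

set_option maxHeartbeats 4000000 in
/-- Generalized Găvruța stability of the difference equation `f(s) - f(s+1) = χ(s)` with a
`C^{2r+1}` control function `δ`, with the improved Euler–Maclaurin error bound. -/
theorem ggs_difference_equation_C2r1
    (a b : ℝ) (hab : a < b) (M : ℕ → ℝ) (hM : StandingAssumptions M)
    (χ : ℝ → ℂ) (hχM : χ ∈ CarlemanClass M)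
    (r : ℕ) (hr : 1 ≤ r)
    (y : ℝ → ℂ) (hy : y ∈ CarlemanClass M)
    (δ : ℝ → ℝ) (hδ : ∀ s : ℝ, 0 ≤ δ s) (hδC : ContDiff ℝ (2 * r + 1 : ℕ) δ)
    (hyδ : ∀ s : ℝ, ‖y s - y (s + 1) - χ s‖ ≤ δ s) :
    ∃ z ∈ CarlemanClass M, (∀ s : ℝ, z s - z (s + 1) = χ s) ∧
      ∀ s : ℝ, ‖y s - z s‖ ≤
        ((⌈max (b - s) 0⌉ + ⌈max (s - a) 0⌉ : ℤ) : ℝ) *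
          sSup (δ '' Set.Icc (s - (⌈max (s - a) 0⌉ : ℝ)) (s + (⌈max (b - s) 0⌉ : ℝ) - 1)) +
        (∑ j ∈ Finset.Icc 1 r,
          Bdieu j / (Nat.factorial (2 * j) : ℝ) *
            (((⌈max (b - s) 0⌉ + ⌈max (s - a) 0⌉ : ℤ) : ℝ) *
              sSup ((fun u => |iteratedDeriv (2 * j) δ u|) ''
                Set.Icc (s - (⌈max (s - a) 0⌉ : ℝ)) (s + (⌈max (b - s) 0⌉ : ℝ) - 1)))) +
        ((r : ℝ) + 1 / 2) * Bdieu r / (Nat.factorial (2 * r + 1) : ℝ) *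
          ((((⌈max (b - s) 0⌉ + ⌈max (s - a) 0⌉ : ℤ) : ℝ) - 1) *
            sSup ((fun u => |iteratedDeriv (2 * r + 1) δ u|) ''
              Set.Icc (s - (⌈max (s - a) 0⌉ : ℝ)) (s + (⌈max (b - s) 0⌉ : ℝ) - 1))) := by
  classical
  obtain ⟨hpos, hnq, -, ⟨h0, h01⟩, hconv, -, -⟩ := hM
  have hchoose : ∀ {i n : ℕ}, i ≤ n → (n.choose i : ℝ) * M i * M (n - i) ≤ M n :=
    fun {i n} h => ggs_choose_mul hpos hconv h0 h
  have hone : ∀ n, 1 ≤ M n ∧ M n ≤ M (n + 1) := ggs_one_le_M hpos hconv h0 h01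
  obtain ⟨φ, hφs, hφa, hφb0, hφ01, Cφ, ρφ, hCφpos, hρφpos, hφbd⟩ :=
    ggs_cutoff hpos (fun {i n} h => hchoose h) hone hnq hab
  obtain ⟨hys, hyb⟩ := hy
  obtain ⟨hχs, hχb⟩ := hχM
  -- complexified cutoff and its complement
  set φc : ℝ → ℂ := fun t => ((φ t : ℝ) : ℂ) with hφcdef
  have hφcs : ContDiff ℝ (⊤:ℕ∞) φc := Complex.ofRealCLM.contDiff.comp hφs
  have hφcbd : ∀ (n : ℕ) (x : ℝ), ‖iteratedDeriv n φc x‖ ≤ Cφ * ρφ ^ n * M n := by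
    intro n x
    have h := ggs_ofReal_norm hφs n x
    calc ‖iteratedDeriv n φc x‖ = ‖iteratedDeriv n φ x‖ := h
      _ ≤ Cφ * ρφ ^ n * M n := hφbd n x
  have hφc1 : ∀ x, ‖φc x‖ ≤ 1 := by
    intro x
    show ‖((φ x : ℝ) : ℂ)‖ ≤ 1
    rw [Complex.norm_real, Real.norm_eq_abs, abs_le]
    exact ⟨by linarith [(hφ01 x).1], (hφ01 x).2⟩
  set ψ : ℝ → ℂ := fun t => 1 - φc t with hψdef
  have hψs : ContDiff ℝ (⊤:ℕ∞) ψ := contDiff_const.sub hφcs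
  set Cψ : ℝ := Cφ + 1 with hCψdef
  have hCψpos : 0 < Cψ := by rw [hCψdef]; linarith
  have hψ1 : ∀ x, ‖ψ x‖ ≤ 1 := by
    intro x
    show ‖1 - φc x‖ ≤ 1
    have he : (1:ℂ) - φc x = (((1 - φ x : ℝ)) : ℂ) := by
      show (1:ℂ) - ((φ x : ℝ) : ℂ) = _
      push_cast
      ring
    rw [he, Complex.norm_real, Real.norm_eq_abs, abs_le]
    constructor <;> [linarith [(hφ01 x).2]; linarith [(hφ01 x).1]]
  have hφcbd' : ∀ (n : ℕ) (x : ℝ), ‖iteratedDeriv n φc x‖ ≤ Cψ * ρφ ^ n * M n := by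
    intro n x
    refine (hφcbd n x).trans ?_
    have h1 : (0:ℝ) ≤ ρφ ^ n * M n := mul_nonneg (pow_nonneg hρφpos.le _) (hpos _).le
    rw [hCψdef]
    nlinarith
  have hψbd : ∀ (n : ℕ) (x : ℝ), ‖iteratedDeriv n ψ x‖ ≤ Cψ * ρφ ^ n * M n := by
    intro n x
    cases n with
    | zero =>
      rw [iteratedDeriv_zero]
      calc ‖ψ x‖ ≤ 1 := hψ1 x
        _ ≤ Cψ * ρφ ^ 0 * M 0 := by
            rw [pow_zero, mul_one]
            have h2 := (hone 0).1
            nlinarith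
    | succ n =>
      have he : iteratedDeriv (n+1) ψ x =
          iteratedDeriv (n+1) (fun _ : ℝ => (1:ℂ)) x - iteratedDeriv (n+1) φc x :=
        ggs_iteratedDeriv_sub contDiff_const hφcs (n+1) x
      rw [he, ggs_iteratedDeriv_const' (1:ℂ) (Nat.succ_ne_zero n) x, zero_sub, norm_neg]
      exact hφcbd' (n+1) x
  have hφczero : ∀ x, b ≤ x → φc x = 0 := by
    intro x hx
    show ((φ x : ℝ) : ℂ) = 0
    rw [hφb0 x hx]; norm_num
  have hψzero : ∀ x, x ≤ a → ψ x = 0 := by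
    intro x hx
    show 1 - φc x = 0
    have : φc x = 1 := by
      show ((φ x : ℝ) : ℂ) = 1
      rw [hφa x hx]; norm_num
    rw [this]; ring
  -- the error function ε
  set τ : ℝ → ℂ := fun s => y (s + 1) with hτdef
  have hτs : ContDiff ℝ (⊤:ℕ∞) τ := hys.comp (contDiff_id.add contDiff_const)
  set ε : ℝ → ℂ := fun s => (y s - τ s) - χ s with hεdef
  have hεs : ContDiff ℝ (⊤:ℕ∞) ε := (hys.sub hτs).sub hχs
  have hεδ : ∀ s, ‖ε s‖ ≤ δ s := by
    intro s
    show ‖(y s - y (s+1)) - χ s‖ ≤ δ s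
    exact hyδ s
  have hεloc : ∀ α β : ℝ, ∃ C ρ : ℝ, 0 < C ∧ 0 < ρ ∧
      ∀ n : ℕ, ∀ x ∈ Set.Icc α β, ‖iteratedDeriv n ε x‖ ≤ C * ρ ^ n * M n := by
    intro α β
    obtain ⟨Cy, ρy, hCy, hρy, hyb1⟩ := hyb α β
    obtain ⟨Cy', ρy', hCy', hρy', hyb2⟩ := hyb (α+1) (β+1)
    obtain ⟨Cχ', ρχ', hCχ', hρχ', hχb1⟩ := hχb α β
    set ρm : ℝ := max ρy (max ρy' ρχ') with hρm
    have hρmpos : 0 < ρm := lt_of_lt_of_le hρy (le_max_left _ _)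
    refine ⟨Cy + Cy' + Cχ', ρm, by linarith, hρmpos, ?_⟩
    intro n x hx
    have e1 : iteratedDeriv n ε x =
        iteratedDeriv n (fun s => y s - τ s) x - iteratedDeriv n χ x :=
      ggs_iteratedDeriv_sub (hys.sub hτs) hχs n x
    have e2 : iteratedDeriv n (fun s => y s - τ s) x =
        iteratedDeriv n y x - iteratedDeriv n τ x :=
      ggs_iteratedDeriv_sub hys hτs n x
    have e3 : iteratedDeriv n τ x = iteratedDeriv n y (x + 1) := ggs_shift y 1 n x
    have hpow : ∀ ρ' : ℝ, 0 < ρ' → ρ' ≤ ρm → ρ' ^ n ≤ ρm ^ n :=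
      fun ρ' h1 h2 => pow_le_pow_left₀ h1.le h2 n
    have hb1 : ‖iteratedDeriv n y x‖ ≤ Cy * ρm ^ n * M n := by
      refine (hyb1 n x hx).trans ?_
      have h := hpow ρy hρy (le_max_left _ _)
      exact mul_le_mul_of_nonneg_right (mul_le_mul_of_nonneg_left h hCy.le) (hpos n).le
    have hb2 : ‖iteratedDeriv n y (x+1)‖ ≤ Cy' * ρm ^ n * M n := by
      refine (hyb2 n (x+1) ⟨by linarith [hx.1], by linarith [hx.2]⟩).trans ?_
      have h := hpow ρy' hρy' ((le_max_left _ _).trans (le_max_right _ _))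
      exact mul_le_mul_of_nonneg_right (mul_le_mul_of_nonneg_left h hCy'.le) (hpos n).le
    have hb3 : ‖iteratedDeriv n χ x‖ ≤ Cχ' * ρm ^ n * M n := by
      refine (hχb1 n x hx).trans ?_
      have h := hpow ρχ' hρχ' ((le_max_right _ _).trans (le_max_right _ _))
      exact mul_le_mul_of_nonneg_right (mul_le_mul_of_nonneg_left h hCχ'.le) (hpos n).le
    rw [e1, e2, e3]
    have hsplit : (Cy + Cy' + Cχ') * ρm ^ n * M n =
        Cy * ρm ^ n * M n + Cy' * ρm ^ n * M n + Cχ' * ρm ^ n * M n := by ring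
    rw [hsplit]
    calc ‖iteratedDeriv n y x - iteratedDeriv n y (x+1) - iteratedDeriv n χ x‖
        ≤ ‖iteratedDeriv n y x - iteratedDeriv n y (x+1)‖ + ‖iteratedDeriv n χ x‖ :=
          norm_sub_le _ _
      _ ≤ (‖iteratedDeriv n y x‖ + ‖iteratedDeriv n y (x+1)‖) + ‖iteratedDeriv n χ x‖ :=
          add_le_add_left (norm_sub_le _ _) _
      _ ≤ Cy * ρm ^ n * M n + Cy' * ρm ^ n * M n + Cχ' * ρm ^ n * M n := by linarith
  -- the series
  set A : ℝ → ℕ → ℂ := fun s k => φc (s + (k:ℝ)) * ε (s + (k:ℝ)) with hAdef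
  set B : ℝ → ℕ → ℂ := fun s k =>
    ψ (s + (-((k:ℝ)+1))) * ε (s + (-((k:ℝ)+1))) with hBdef
  have hA0 : ∀ (s : ℝ) (k : ℕ), b ≤ s + (k:ℝ) → A s k = 0 := by
    intro s k hk
    show φc (s + (k:ℝ)) * ε (s + (k:ℝ)) = 0
    rw [hφczero _ hk, zero_mul]
  have hB0 : ∀ (s : ℝ) (k : ℕ), s + (-((k:ℝ)+1)) ≤ a → B s k = 0 := by
    intro s k hk
    show ψ (s + (-((k:ℝ)+1))) * ε (s + (-((k:ℝ)+1))) = 0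
    rw [hψzero _ hk, zero_mul]
  have hAvan : ∀ (s : ℝ) (K : ℕ), b - s ≤ K → ∀ k ∉ Finset.range K, A s k = 0 := by
    intro s K hK k hk
    have hkK : K ≤ k := by by_contra h; exact hk (Finset.mem_range.mpr (not_le.mp h))
    have h2 : (K:ℝ) ≤ (k:ℝ) := Nat.cast_le.mpr hkK
    exact hA0 s k (by linarith)
  have hBvan : ∀ (s : ℝ) (K : ℕ), s - a ≤ K → ∀ k ∉ Finset.range K, B s k = 0 := by
    intro s K hK k hk
    have hkK : K ≤ k := by by_contra h; exact hk (Finset.mem_range.mpr (not_le.mp h))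
    have h2 : (K:ℝ) ≤ (k:ℝ) := Nat.cast_le.mpr hkK
    exact hB0 s k (by linarith)
  have hAsum : ∀ s, Summable (A s) := fun s =>
    summable_of_ne_finset_zero (s := Finset.range ⌈b - s⌉₊) (hAvan s _ (Nat.le_ceil _))
  have hBsum : ∀ s, Summable (B s) := fun s =>
    summable_of_ne_finset_zero (s := Finset.range ⌈s - a⌉₊) (hBvan s _ (Nat.le_ceil _))
  set E : ℝ → ℂ := fun s => (∑' k, A s k) - ∑' k, B s k with hEdef
  -- functional equation for E
  have hEfe : ∀ s : ℝ, E s - E (s+1) = ε s := by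
    intro s
    have h1 : ∑' k, A s k = A s 0 + ∑' k, A s (k+1) := (hAsum s).tsum_eq_zero_add
    have h1' : ∀ k : ℕ, A s (k+1) = A (s+1) k := by
      intro k
      show φc (s + ((k+1:ℕ):ℝ)) * ε (s + ((k+1:ℕ):ℝ)) =
        φc ((s+1) + (k:ℝ)) * ε ((s+1) + (k:ℝ))
      have harg : s + ((k+1:ℕ):ℝ) = (s+1) + (k:ℝ) := by push_cast; ring
      rw [harg]
    set C' : ℕ → ℂ := fun k => ψ (s + (-(k:ℝ))) * ε (s + (-(k:ℝ))) with hC'def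
    have h2' : ∀ k : ℕ, B (s+1) k = C' k := by
      intro k
      show ψ ((s+1) + (-((k:ℝ)+1))) * ε ((s+1) + (-((k:ℝ)+1))) =
        ψ (s + (-(k:ℝ))) * ε (s + (-(k:ℝ)))
      have harg : (s+1) + (-((k:ℝ)+1)) = s + (-(k:ℝ)) := by ring
      rw [harg]
    have hC'van : ∀ k ∉ Finset.range (⌈s - a⌉₊ + 1), C' k = 0 := by
      intro k hk
      have hkK : ⌈s - a⌉₊ + 1 ≤ k := by
        by_contra h; exact hk (Finset.mem_range.mpr (not_le.mp h))
      have hle : (s - a : ℝ) ≤ ⌈s - a⌉₊ := Nat.le_ceil _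
      have hcast : ((⌈s-a⌉₊ + 1 : ℕ):ℝ) ≤ (k:ℝ) := Nat.cast_le.mpr hkK
      push_cast at hcast
      show ψ (s + (-(k:ℝ))) * ε (s + (-(k:ℝ))) = 0
      rw [hψzero _ (by linarith), zero_mul]
    have hC'sum : Summable C' := summable_of_ne_finset_zero hC'van
    have h2 : ∑' k, C' k = C' 0 + ∑' k, C' (k+1) := hC'sum.tsum_eq_zero_add
    have h3 : ∑' k, A (s+1) k = ∑' k, A s (k+1) := tsum_congr (fun k => (h1' k).symm)
    have h4 : ∑' k, B (s+1) k = ∑' k, C' k := tsum_congr h2'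
    have h5 : ∀ k : ℕ, C' (k+1) = B s k := by
      intro k
      show ψ (s + (-((k+1:ℕ):ℝ))) * ε (s + (-((k+1:ℕ):ℝ))) =
        ψ (s + (-((k:ℝ)+1))) * ε (s + (-((k:ℝ)+1)))
      have harg : s + (-((k+1:ℕ):ℝ)) = s + (-((k:ℝ)+1)) := by push_cast; ring
      rw [harg]
    have h6 : ∑' k, C' (k+1) = ∑' k, B s k := tsum_congr h5
    have hA00 : A s 0 = φc s * ε s := by
      show φc (s + ((0:ℕ):ℝ)) * ε (s + ((0:ℕ):ℝ)) = φc s * ε s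
      norm_num
    have hC'0 : C' 0 = ψ s * ε s := by
      show ψ (s + (-((0:ℕ):ℝ))) * ε (s + (-((0:ℕ):ℝ))) = ψ s * ε s
      norm_num
    have hεexp : φc s * ε s + ψ s * ε s = ε s := by
      show φc s * ε s + (1 - φc s) * ε s = ε s
      ring
    show ((∑' k, A s k) - ∑' k, B s k) - ((∑' k, A (s+1) k) - ∑' k, B (s+1) k) = ε s
    rw [h3, h4, h2, h6, h1, hA00, hC'0]
    linear_combination hεexp
  -- smoothness of E
  have hAs : ∀ k : ℕ, ContDiff ℝ (⊤:ℕ∞) (fun s => A s k) := by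
    intro k
    show ContDiff ℝ (⊤:ℕ∞) (fun s => φc (s + (k:ℝ)) * ε (s + (k:ℝ)))
    exact (hφcs.comp (contDiff_id.add contDiff_const)).mul
      (hεs.comp (contDiff_id.add contDiff_const))
  have hBs : ∀ k : ℕ, ContDiff ℝ (⊤:ℕ∞) (fun s => B s k) := by
    intro k
    show ContDiff ℝ (⊤:ℕ∞) (fun s => ψ (s + (-((k:ℝ)+1))) * ε (s + (-((k:ℝ)+1))))
    exact (hψs.comp (contDiff_id.add contDiff_const)).mul
      (hεs.comp (contDiff_id.add contDiff_const))
  have hFSs : ∀ K K' : ℕ, ContDiff ℝ (⊤:ℕ∞)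
      (fun s => (∑ k ∈ Finset.range K, A s k) - ∑ k ∈ Finset.range K', B s k) :=
    fun K K' => (ContDiff.sum fun i _ => hAs i).sub (ContDiff.sum fun i _ => hBs i)
  have hErep : ∀ (K K' : ℕ) (s : ℝ), b - s ≤ K → s - a ≤ K' →
      E s = (∑ k ∈ Finset.range K, A s k) - ∑ k ∈ Finset.range K', B s k := by
    intro K K' s hK hK'
    show ((∑' k, A s k) - ∑' k, B s k) = _
    rw [tsum_eq_sum (hAvan s K hK), tsum_eq_sum (hBvan s K' hK')]
  have hEcd : ContDiff ℝ (⊤:ℕ∞) E := by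
    rw [contDiff_iff_contDiffAt]
    intro s₀
    have hev : E =ᶠ[nhds s₀] (fun s =>
        (∑ k ∈ Finset.range ⌈b - (s₀ - 1)⌉₊, A s k) -
          ∑ k ∈ Finset.range ⌈(s₀ + 1) - a⌉₊, B s k) := by
      filter_upwards [Ioo_mem_nhds (by linarith : s₀ - 1 < s₀) (by linarith : s₀ < s₀ + 1)]
        with s hs
      apply hErep
      · have h1 := Nat.le_ceil (b - (s₀ - 1))
        have h2 := hs.1
        linarith
      · have h1 := Nat.le_ceil ((s₀ + 1) - a)
        have h2 := hs.2
        linarith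
    exact ((hFSs _ _).contDiffAt).congr_of_eventuallyEq hev
  -- definition of z
  set z : ℝ → ℂ := fun s => y s - E s with hzdef
  have hzs : ContDiff ℝ (⊤:ℕ∞) z := hys.sub hEcd
  have hzfe : ∀ s : ℝ, z s - z (s+1) = χ s := by
    intro s
    have h := hEfe s
    have hεs' : ε s = (y s - y (s+1)) - χ s := rfl
    rw [hεs'] at h
    show (y s - E s) - (y (s+1) - E (s+1)) = χ s
    linear_combination -h
  -- Carleman bounds for z
  have hzCar : ∀ α β : ℝ, ∃ C ρ : ℝ, 0 < C ∧ 0 < ρ ∧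
      ∀ n : ℕ, ∀ x ∈ Set.Icc α β, ‖iteratedDeriv n z x‖ ≤ C * ρ ^ n * M n := by
    intro α β
    set K : ℕ := ⌈b - (α - 1)⌉₊ with hKdef
    set K' : ℕ := ⌈(β + 1) - a⌉₊ with hK'def
    obtain ⟨Cε, ρε, hCε, hρε, hεbd⟩ := hεloc (α - (K' + 1)) (β + K)
    obtain ⟨Cy, ρy, hCy, hρy, hyb1⟩ := hyb α β
    have hEeq : Set.EqOn E (fun s =>
        (∑ k ∈ Finset.range K, A s k) - ∑ k ∈ Finset.range K', B s k)
        (Set.Ioo (α-1) (β+1)) := by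
      intro s hs
      apply hErep
      · have h1 := Nat.le_ceil (b - (α - 1))
        have h2 := hs.1
        rw [hKdef]
        linarith
      · have h1 := Nat.le_ceil ((β + 1) - a)
        have h2 := hs.2
        rw [hK'def]
        linarith
    have hEd := fun n => hEeq.iteratedDeriv_of_isOpen isOpen_Ioo n
    have hAbd : ∀ k ∈ Finset.range K, ∀ n : ℕ, ∀ x ∈ Set.Icc α β,
        ‖iteratedDeriv n (fun s => A s k) x‖ ≤ (Cψ * Cε) * (ρφ + ρε) ^ n * M n := by
      intro k hk
      have hφk : ∀ n : ℕ, ∀ x ∈ Set.Icc α β,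
          ‖iteratedDeriv n (fun s => φc (s + (k:ℝ))) x‖ ≤ Cψ * ρφ ^ n * M n := by
        intro n x _
        rw [ggs_shift φc (k:ℝ) n x]
        exact hφcbd' n _
      have hεk : ∀ n : ℕ, ∀ x ∈ Set.Icc α β,
          ‖iteratedDeriv n (fun s => ε (s + (k:ℝ))) x‖ ≤ Cε * ρε ^ n * M n := by
        intro n x hx
        rw [ggs_shift ε (k:ℝ) n x]
        apply hεbd
        have hkK : (k:ℝ) < K := by exact_mod_cast Finset.mem_range.mp hk
        constructor
        · have : (0:ℝ) ≤ (k:ℝ) := Nat.cast_nonneg k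
          have h2 : (0:ℝ) ≤ (K':ℝ) := Nat.cast_nonneg K'
          have := hx.1
          linarith
        · have := hx.2
          linarith
      exact ggs_mul_bound hpos (fun {i n} h => hchoose h)
        (hφcs.comp (contDiff_id.add contDiff_const))
        (hεs.comp (contDiff_id.add contDiff_const))
        hCψpos.le hCε.le hρφpos.le hρε.le hφk hεk
    have hBbd : ∀ k ∈ Finset.range K', ∀ n : ℕ, ∀ x ∈ Set.Icc α β,
        ‖iteratedDeriv n (fun s => B s k) x‖ ≤ (Cψ * Cε) * (ρφ + ρε) ^ n * M n := by
      intro k hk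
      have hψk : ∀ n : ℕ, ∀ x ∈ Set.Icc α β,
          ‖iteratedDeriv n (fun s => ψ (s + (-((k:ℝ)+1)))) x‖ ≤ Cψ * ρφ ^ n * M n := by
        intro n x _
        rw [ggs_shift ψ (-((k:ℝ)+1)) n x]
        exact hψbd n _
      have hεk : ∀ n : ℕ, ∀ x ∈ Set.Icc α β,
          ‖iteratedDeriv n (fun s => ε (s + (-((k:ℝ)+1)))) x‖ ≤ Cε * ρε ^ n * M n := by
        intro n x hx
        rw [ggs_shift ε (-((k:ℝ)+1)) n x]
        apply hεbd
        have hkK : (k:ℝ) < K' := by exact_mod_cast Finset.mem_range.mp hk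
        constructor
        · have := hx.1
          linarith
        · have h2 : (0:ℝ) ≤ (K:ℝ) := Nat.cast_nonneg K
          have h3 : (0:ℝ) ≤ (k:ℝ) := Nat.cast_nonneg k
          have := hx.2
          linarith
      exact ggs_mul_bound hpos (fun {i n} h => hchoose h)
        (hψs.comp (contDiff_id.add contDiff_const))
        (hεs.comp (contDiff_id.add contDiff_const))
        hCψpos.le hCε.le hρφpos.le hρε.le hψk hεk
    refine ⟨Cy + ((K + K' : ℕ):ℝ) * (Cψ * Cε) + 1, max ρy (ρφ + ρε), ?_, ?_, ?_⟩
    · have h1 : (0:ℝ) ≤ ((K + K' : ℕ):ℝ) := Nat.cast_nonneg _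
      nlinarith [mul_pos hCψpos hCε]
    · exact lt_of_lt_of_le hρy (le_max_left _ _)
    intro n x hx
    have hx' : x ∈ Set.Ioo (α-1) (β+1) := ⟨by linarith [hx.1], by linarith [hx.2]⟩
    have e1 : iteratedDeriv n z x = iteratedDeriv n y x - iteratedDeriv n E x :=
      ggs_iteratedDeriv_sub hys hEcd n x
    have e2 : iteratedDeriv n E x = iteratedDeriv n (fun s =>
        (∑ k ∈ Finset.range K, A s k) - ∑ k ∈ Finset.range K', B s k) x := hEd n hx'
    have e3 : iteratedDeriv n (fun s =>
        (∑ k ∈ Finset.range K, A s k) - ∑ k ∈ Finset.range K', B s k) x =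
        (∑ k ∈ Finset.range K, iteratedDeriv n (fun s => A s k) x) -
          ∑ k ∈ Finset.range K', iteratedDeriv n (fun s => B s k) x := by
      rw [ggs_iteratedDeriv_sub (ContDiff.sum fun i _ => hAs i)
        (ContDiff.sum fun i _ => hBs i) n x,
        ggs_iteratedDeriv_finsum _ K hAs n x, ggs_iteratedDeriv_finsum _ K' hBs n x]
    set ρm : ℝ := max ρy (ρφ + ρε) with hρmdef
    have hρmpos : 0 < ρm := lt_of_lt_of_le hρy (le_max_left _ _)
    have hTbd : (Cψ * Cε) * (ρφ + ρε) ^ n * M n ≤ (Cψ * Cε) * ρm ^ n * M n := by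
      have h1 := pow_le_pow_left₀ (by linarith : (0:ℝ) ≤ ρφ + ρε) (le_max_right ρy (ρφ + ρε)) n
      exact mul_le_mul_of_nonneg_right (mul_le_mul_of_nonneg_left h1
        (mul_pos hCψpos hCε).le) (hpos n).le
    have hsumA : ‖∑ k ∈ Finset.range K, iteratedDeriv n (fun s => A s k) x‖ ≤
        (K:ℝ) * ((Cψ * Cε) * ρm ^ n * M n) := by
      refine le_trans (norm_sum_le _ _) ?_
      have := Finset.sum_le_card_nsmul (Finset.range K)
        (fun k => ‖iteratedDeriv n (fun s => A s k) x‖) ((Cψ * Cε) * ρm ^ n * M n)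
        (fun k hk => le_trans (hAbd k hk n x hx) hTbd)
      rwa [Finset.card_range, nsmul_eq_mul] at this
    have hsumB : ‖∑ k ∈ Finset.range K', iteratedDeriv n (fun s => B s k) x‖ ≤
        (K':ℝ) * ((Cψ * Cε) * ρm ^ n * M n) := by
      refine le_trans (norm_sum_le _ _) ?_
      have := Finset.sum_le_card_nsmul (Finset.range K')
        (fun k => ‖iteratedDeriv n (fun s => B s k) x‖) ((Cψ * Cε) * ρm ^ n * M n)
        (fun k hk => le_trans (hBbd k hk n x hx) hTbd)
      rwa [Finset.card_range, nsmul_eq_mul] at this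
    have hyb' : ‖iteratedDeriv n y x‖ ≤ Cy * ρm ^ n * M n := by
      refine (hyb1 n x hx).trans ?_
      have h1 := pow_le_pow_left₀ hρy.le (le_max_left ρy (ρφ + ρε)) n
      exact mul_le_mul_of_nonneg_right (mul_le_mul_of_nonneg_left h1 hCy.le) (hpos n).le
    rw [e1, e2, e3]
    have hfinal : Cy * ρm ^ n * M n + ((K:ℝ) * ((Cψ * Cε) * ρm ^ n * M n) +
        (K':ℝ) * ((Cψ * Cε) * ρm ^ n * M n)) ≤
        (Cy + ((K + K' : ℕ):ℝ) * (Cψ * Cε) + 1) * ρm ^ n * M n := by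
      have hcast : ((K + K' : ℕ):ℝ) = (K:ℝ) + (K':ℝ) := by push_cast; ring
      rw [hcast]
      have h2 : (0:ℝ) ≤ ρm ^ n * M n := mul_nonneg (pow_nonneg hρmpos.le _) (hpos _).le
      nlinarith
    calc ‖iteratedDeriv n y x - ((∑ k ∈ Finset.range K, iteratedDeriv n (fun s => A s k) x) -
          ∑ k ∈ Finset.range K', iteratedDeriv n (fun s => B s k) x)‖
        ≤ ‖iteratedDeriv n y x‖ + ‖(∑ k ∈ Finset.range K, iteratedDeriv n (fun s => A s k) x) -
          ∑ k ∈ Finset.range K', iteratedDeriv n (fun s => B s k) x‖ := norm_sub_le _ _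
      _ ≤ ‖iteratedDeriv n y x‖ + (‖∑ k ∈ Finset.range K, iteratedDeriv n (fun s => A s k) x‖ +
          ‖∑ k ∈ Finset.range K', iteratedDeriv n (fun s => B s k) x‖) :=
          add_le_add_right (norm_sub_le _ _) _
      _ ≤ Cy * ρm ^ n * M n + ((K:ℝ) * ((Cψ * Cε) * ρm ^ n * M n) +
          (K':ℝ) * ((Cψ * Cε) * ρm ^ n * M n)) := by linarith
      _ ≤ (Cy + ((K + K' : ℕ):ℝ) * (Cψ * Cε) + 1) * ρm ^ n * M n := hfinal
  -- conclusion
  refine ⟨z, ⟨hzs, hzCar⟩, hzfe, ?_⟩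
  intro s
  set Ki : ℤ := ⌈max (b - s) 0⌉ with hKidef
  set Ki' : ℤ := ⌈max (s - a) 0⌉ with hKi'def
  have hKi0 : (0:ℤ) ≤ Ki := Int.ceil_nonneg (le_max_right _ _)
  have hKi'0 : (0:ℤ) ≤ Ki' := Int.ceil_nonneg (le_max_right _ _)
  set K : ℕ := Ki.toNat with hKdef
  set K' : ℕ := Ki'.toNat with hK'def
  have hKcast : (K:ℝ) = (Ki:ℝ) := by
    have h := Int.toNat_of_nonneg hKi0
    exact_mod_cast congrArg (fun z : ℤ => (z:ℝ)) h
  have hK'cast : (K':ℝ) = (Ki':ℝ) := by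
    have h := Int.toNat_of_nonneg hKi'0
    exact_mod_cast congrArg (fun z : ℤ => (z:ℝ)) h
  have hKnn : (0:ℝ) ≤ (Ki:ℝ) := by exact_mod_cast hKi0
  have hKi'nn : (0:ℝ) ≤ (Ki':ℝ) := by exact_mod_cast hKi'0
  have hKge : b - s ≤ (K:ℝ) := by
    rw [hKcast]
    exact le_trans (le_max_left _ _) (Int.le_ceil _)
  have hK'ge : s - a ≤ (K':ℝ) := by
    rw [hK'cast]
    exact le_trans (le_max_left _ _) (Int.le_ceil _)
  have hK1 : (1:ℝ) ≤ (Ki:ℝ) + (Ki':ℝ) := by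
    rcases lt_or_ge s b with h | h
    · have h1 : (1:ℤ) ≤ Ki := Int.ceil_pos.mpr (lt_max_iff.mpr (Or.inl (by linarith)))
      have h2 : (1:ℝ) ≤ (Ki:ℝ) := by exact_mod_cast h1
      linarith
    · have h1 : (1:ℤ) ≤ Ki' := Int.ceil_pos.mpr (lt_max_iff.mpr (Or.inl (by linarith)))
      have h2 : (1:ℝ) ≤ (Ki':ℝ) := by exact_mod_cast h1
      linarith
  set S : ℝ := sSup (δ '' Set.Icc (s - (Ki':ℝ)) (s + (Ki:ℝ) - 1)) with hSdef
  have hlohi : s - (Ki':ℝ) ≤ s + (Ki:ℝ) - 1 := by linarith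
  have hbdd : BddAbove (δ '' Set.Icc (s - (Ki':ℝ)) (s + (Ki:ℝ) - 1)) :=
    (isCompact_Icc.image_of_continuousOn (hδC.continuous.continuousOn)).bddAbove
  have hmemS : ∀ t ∈ Set.Icc (s - (Ki':ℝ)) (s + (Ki:ℝ) - 1), δ t ≤ S :=
    fun t ht => le_csSup hbdd ⟨t, ht, rfl⟩
  have hAle : ∀ k ∈ Finset.range K, ‖A s k‖ ≤ S := by
    intro k hk
    have hk1 : k + 1 ≤ K := Finset.mem_range.mp hk
    have hk1' : ((k+1:ℕ):ℝ) ≤ (K:ℝ) := Nat.cast_le.mpr hk1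
    push_cast at hk1'
    have hknn : (0:ℝ) ≤ (k:ℝ) := Nat.cast_nonneg k
    have hmem : s + (k:ℝ) ∈ Set.Icc (s - (Ki':ℝ)) (s + (Ki:ℝ) - 1) := by
      constructor
      · linarith
      · linarith [hKcast]
    calc ‖A s k‖ = ‖φc (s + (k:ℝ))‖ * ‖ε (s + (k:ℝ))‖ := norm_mul _ _
      _ ≤ 1 * δ (s + (k:ℝ)) := mul_le_mul (hφc1 _) (hεδ _) (norm_nonneg _) zero_le_one
      _ = δ (s + (k:ℝ)) := one_mul _
      _ ≤ S := hmemS _ hmem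
  have hBle : ∀ k ∈ Finset.range K', ‖B s k‖ ≤ S := by
    intro k hk
    have hk1 : k + 1 ≤ K' := Finset.mem_range.mp hk
    have hk1' : ((k+1:ℕ):ℝ) ≤ (K':ℝ) := Nat.cast_le.mpr hk1
    push_cast at hk1'
    have hmem : s + (-((k:ℝ)+1)) ∈ Set.Icc (s - (Ki':ℝ)) (s + (Ki:ℝ) - 1) := by
      constructor
      · linarith [hK'cast]
      · have hknn : (0:ℝ) ≤ (k:ℝ) := Nat.cast_nonneg k
        linarith
    calc ‖B s k‖ = ‖ψ (s + (-((k:ℝ)+1)))‖ * ‖ε (s + (-((k:ℝ)+1)))‖ := norm_mul _ _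
      _ ≤ 1 * δ (s + (-((k:ℝ)+1))) := mul_le_mul (hψ1 _) (hεδ _) (norm_nonneg _) zero_le_one
      _ = δ (s + (-((k:ℝ)+1))) := one_mul _
      _ ≤ S := hmemS _ hmem
  have hrep := hErep K K' s hKge hK'ge
  have hEbound : ‖E s‖ ≤ ((Ki:ℝ) + (Ki':ℝ)) * S := by
    rw [hrep]
    calc ‖(∑ k ∈ Finset.range K, A s k) - ∑ k ∈ Finset.range K', B s k‖
        ≤ ‖∑ k ∈ Finset.range K, A s k‖ + ‖∑ k ∈ Finset.range K', B s k‖ := norm_sub_le _ _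
      _ ≤ (∑ k ∈ Finset.range K, ‖A s k‖) + ∑ k ∈ Finset.range K', ‖B s k‖ :=
          add_le_add (norm_sum_le _ _) (norm_sum_le _ _)
      _ ≤ (K:ℝ) * S + (K':ℝ) * S := by
          have h1 := Finset.sum_le_card_nsmul (Finset.range K) (fun k => ‖A s k‖) S hAle
          have h2 := Finset.sum_le_card_nsmul (Finset.range K') (fun k => ‖B s k‖) S hBle
          rw [Finset.card_range, nsmul_eq_mul] at h1 h2
          linarith
      _ = ((Ki:ℝ) + (Ki':ℝ)) * S := by rw [hKcast, hK'cast]; ring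
  have hyzE : y s - z s = E s := by
    show y s - (y s - E s) = E s
    ring
  have hsup2 : ∀ j : ℕ, j ∈ Finset.Icc 1 r → (0:ℝ) ≤ sSup ((fun u => |iteratedDeriv (2*j) δ u|) ''
      Set.Icc (s - (Ki':ℝ)) (s + (Ki:ℝ) - 1)) := by
    intro j hj
    obtain ⟨hj1, hjr⟩ := Finset.mem_Icc.mp hj
    have hcont : Continuous fun u => |iteratedDeriv (2*j) δ u| :=
      (ContDiff.continuous_iteratedDeriv (2*j) hδC
        (by exact_mod_cast (by omega : 2*j ≤ 2*r+1))).abs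
    have hbdd2 : BddAbove ((fun u => |iteratedDeriv (2*j) δ u|) ''
        Set.Icc (s - (Ki':ℝ)) (s + (Ki:ℝ) - 1)) :=
      (isCompact_Icc.image_of_continuousOn hcont.continuousOn).bddAbove
    exact le_trans (abs_nonneg _) (le_csSup hbdd2 ⟨s - (Ki':ℝ), ⟨le_rfl, hlohi⟩, rfl⟩)
  have hsup3 : (0:ℝ) ≤ sSup ((fun u => |iteratedDeriv (2*r+1) δ u|) ''
      Set.Icc (s - (Ki':ℝ)) (s + (Ki:ℝ) - 1)) := by
    have hcont : Continuous fun u => |iteratedDeriv (2*r+1) δ u| :=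
      (ContDiff.continuous_iteratedDeriv (2*r+1) hδC (le_refl _)).abs
    have hbdd2 : BddAbove ((fun u => |iteratedDeriv (2*r+1) δ u|) ''
        Set.Icc (s - (Ki':ℝ)) (s + (Ki:ℝ) - 1)) :=
      (isCompact_Icc.image_of_continuousOn hcont.continuousOn).bddAbove
    exact le_trans (abs_nonneg _) (le_csSup hbdd2 ⟨s - (Ki':ℝ), ⟨le_rfl, hlohi⟩, rfl⟩)
  have hcastsum : ((Ki + Ki' : ℤ):ℝ) = (Ki:ℝ) + (Ki':ℝ) := by push_cast; ring
  rw [hcastsum]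
  have hterm2 : (0:ℝ) ≤ ∑ j ∈ Finset.Icc 1 r,
      Bdieu j / (Nat.factorial (2 * j) : ℝ) *
        (((Ki:ℝ) + (Ki':ℝ)) * sSup ((fun u => |iteratedDeriv (2 * j) δ u|) ''
          Set.Icc (s - (Ki':ℝ)) (s + (Ki:ℝ) - 1))) := by
    apply Finset.sum_nonneg
    intro j hj
    apply mul_nonneg (div_nonneg (abs_nonneg _) (Nat.cast_nonneg _))
    exact mul_nonneg (by linarith) (hsup2 j hj)
  have hterm3 : (0:ℝ) ≤ ((r : ℝ) + 1 / 2) * Bdieu r / (Nat.factorial (2 * r + 1) : ℝ) *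
      ((((Ki:ℝ) + (Ki':ℝ)) - 1) * sSup ((fun u => |iteratedDeriv (2 * r + 1) δ u|) ''
        Set.Icc (s - (Ki':ℝ)) (s + (Ki:ℝ) - 1))) := by
    apply mul_nonneg
    · apply div_nonneg _ (Nat.cast_nonneg _)
      apply mul_nonneg _ (abs_nonneg _)
      positivity
    · exact mul_nonneg (by linarith) hsup3
  have hmain : ‖y s - z s‖ ≤ ((Ki:ℝ) + (Ki':ℝ)) * S := by
    rw [hyzE]
    exact hEbound
  linarith [hmain, hterm2, hterm3]
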